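/- Let n ≥ 2. There is no probability measure μ on ℝⁿ whose support has cardinality at most n+1 and which matches the moments of the standard n-dimensional Gaussian distribution up to degree three, i.e., which satisfies ∫ x_i μ(dx) = 0 for all i, ∫ x_i x_j μ(dx) = δ_{ij} for all i, j, and ∫ x_i x_j x_k μ(dx) = 0 for all i, j, k in {1, …, n}. -/

import Mathlib

open MeasureTheory
open scoped ENNReal

section Auxiliary

open Finset Matrix

lemma cube_sum_expand {n : ℕ} (f : Fin n → ℝ) :
    (∑ i, f i)^3 = ∑ i, ∑ j, ∑ k, f i * f j * f k := by
  rw [pow_succ, pow_two, Finset.sum_mul_sum, Finset.sum_mul]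
  exact Finset.sum_congr rfl fun i _ => by
    rw [Finset.sum_mul]
    exact Finset.sum_congr rfl fun j _ => by rw [Finset.mul_sum]

lemma core_alg (n : ℕ) (hn : 2 ≤ n) (S : Finset (Fin n → ℝ)) (hcard : S.card ≤ n + 1)
    (p : (Fin n → ℝ) → ℝ) (hp0 : ∀ s, 0 ≤ p s)
    (h0 : ∑ s ∈ S, p s = 1)
    (h1 : ∀ i, ∑ s ∈ S, p s * s i = 0)
    (h2 : ∀ i j, ∑ s ∈ S, p s * (s i * s j) = if i = j then 1 else 0)
    (h3 : ∀ i j k, ∑ s ∈ S, p s * (s i * s j * s k) = 0) : False := by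
  classical
  set q : (Fin n → ℝ) → ℝ := fun x => Real.sqrt (p x) with hq
  have hqq : ∀ x, q x * q x = p x := fun x => Real.mul_self_sqrt (hp0 x)
  set V : Matrix (Fin n ⊕ Unit) {x // x ∈ S} ℝ :=
    fun r s => Sum.elim (fun i => q s.1 * s.1 i) (fun _ => q s.1) r with hV
  have hVVt : V * Vᵀ = 1 := by
    ext r r'
    have hsum : ∀ f : (Fin n → ℝ) → ℝ, ∑ s : {x // x ∈ S}, f s.1 = ∑ s ∈ S, f s :=
      fun f => Finset.sum_coe_sort S f
    rcases r with i | u <;> rcases r' with j | u'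
    · have : (V * Vᵀ) (Sum.inl i) (Sum.inl j) = ∑ s ∈ S, p s * (s i * s j) := by
        rw [Matrix.mul_apply, ← hsum fun x => p x * (x i * x j)]
        exact Finset.sum_congr rfl fun s _ => by
          simp only [Matrix.transpose_apply]
          simp only [hV, Matrix.transpose_apply, Sum.elim_inl]
          rw [← hqq s.1]; ring
      rw [this, h2 i j, Matrix.one_apply]
      simp
    · have : (V * Vᵀ) (Sum.inl i) (Sum.inr u') = ∑ s ∈ S, p s * s i := by
        rw [Matrix.mul_apply, ← hsum fun x => p x * x i]
        exact Finset.sum_congr rfl fun s _ => by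
          simp only [Matrix.transpose_apply]
          simp only [hV, Matrix.transpose_apply, Sum.elim_inl, Sum.elim_inr]
          rw [← hqq s.1]; ring
      rw [this, h1 i, Matrix.one_apply_ne (by simp)]
    · have : (V * Vᵀ) (Sum.inr u) (Sum.inl j) = ∑ s ∈ S, p s * s j := by
        rw [Matrix.mul_apply, ← hsum fun x => p x * x j]
        exact Finset.sum_congr rfl fun s _ => by
          simp only [Matrix.transpose_apply]
          simp only [hV, Matrix.transpose_apply, Sum.elim_inl, Sum.elim_inr]
          rw [← hqq s.1]; ring
      rw [this, h1 j, Matrix.one_apply_ne (by simp)]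
    · have : (V * Vᵀ) (Sum.inr u) (Sum.inr u') = ∑ s ∈ S, p s := by
        rw [Matrix.mul_apply, ← hsum fun x => p x]
        exact Finset.sum_congr rfl fun s _ => by
          simp only [Matrix.transpose_apply]
          simp only [hV, Matrix.transpose_apply, Sum.elim_inr]
          rw [← hqq s.1]
      rw [this, h0, Matrix.one_apply]
      simp
  -- card S = n + 1
  have hcard2 : Fintype.card {x // x ∈ S} = Fintype.card (Fin n ⊕ Unit) := by
    rw [Fintype.card_coe, Fintype.card_sum, Fintype.card_fin, Fintype.card_unit]
    refine le_antisymm hcard ?_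
    by_contra h
    push_neg at h
    have hr1 : (V * Vᵀ).rank = n + 1 := by
      rw [hVVt, Matrix.rank_one, Fintype.card_sum, Fintype.card_fin, Fintype.card_unit]
    have hr2 : (V * Vᵀ).rank ≤ S.card :=
      le_trans (Matrix.rank_mul_le_left V Vᵀ) (by simpa [Fintype.card_coe] using Matrix.rank_le_card_width V)
    omega
  have e : (Fin n ⊕ Unit) ≃ {x // x ∈ S} := Fintype.equivOfCardEq hcard2.symm
  have hVtV : Vᵀ * V = 1 := (Matrix.mul_eq_one_comm_of_equiv e).mp hVVt
  -- entrywise consequences of Vᵀ * V = 1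
  have hK : ∀ s t : {x // x ∈ S},
      (q s.1 * q t.1) * ((∑ i, s.1 i * t.1 i) + 1) = if s = t then 1 else 0 := by
    intro s t
    have h := congrFun (congrFun hVtV s) t
    rw [Matrix.mul_apply, Fintype.sum_sum_type, Matrix.one_apply] at h
    rw [← h]
    simp only [Matrix.transpose_apply]
    simp only [hV, Matrix.transpose_apply, Sum.elim_inl, Sum.elim_inr]
    rw [mul_add, mul_one, Finset.mul_sum]
    congr 1
    · exact Finset.sum_congr rfl fun i _ => by ring
    · simp
  have hdiag : ∀ s : {x // x ∈ S}, p s.1 * ((∑ i, s.1 i * s.1 i) + 1) = 1 := by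
    intro s
    have := hK s s
    rw [if_pos rfl, hqq] at this
    exact this
  have hpne : ∀ s : {x // x ∈ S}, p s.1 ≠ 0 := by
    intro s h
    have := hdiag s
    rw [h, zero_mul] at this
    exact zero_ne_one this
  have hqne : ∀ s : {x // x ∈ S}, q s.1 ≠ 0 := by
    intro s h
    exact hpne s (by rw [← hqq s.1, h, mul_zero])
  have hoff : ∀ s t : {x // x ∈ S}, s ≠ t → (∑ i, s.1 i * t.1 i) = -1 := by
    intro s t hst
    have := hK s t
    rw [if_neg hst] at this
    have h2' : (∑ i, s.1 i * t.1 i) + 1 = 0 :=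
      (mul_eq_zero.mp this).resolve_left (mul_ne_zero (hqne s) (hqne t))
    linarith
  -- contracted third moments
  have hcontr : ∀ t : {x // x ∈ S}, ∑ s ∈ S, p s * (∑ i, s i * t.1 i)^3 = 0 := by
    intro t
    calc ∑ s ∈ S, p s * (∑ i, s i * t.1 i)^3
        = ∑ s ∈ S, ∑ i, ∑ j, ∑ k, (t.1 i * t.1 j * t.1 k) * (p s * (s i * s j * s k)) := by
          refine Finset.sum_congr rfl fun s _ => ?_
          rw [cube_sum_expand fun i => s i * t.1 i, Finset.mul_sum]
          refine Finset.sum_congr rfl fun i _ => ?_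
          rw [Finset.mul_sum]
          refine Finset.sum_congr rfl fun j _ => ?_
          rw [Finset.mul_sum]
          refine Finset.sum_congr rfl fun k _ => ?_
          ring
      _ = ∑ i, ∑ j, ∑ k, (t.1 i * t.1 j * t.1 k) * ∑ s ∈ S, p s * (s i * s j * s k) := by
          rw [Finset.sum_comm]
          refine Finset.sum_congr rfl fun i _ => ?_
          rw [Finset.sum_comm]
          refine Finset.sum_congr rfl fun j _ => ?_
          rw [Finset.sum_comm]
          refine Finset.sum_congr rfl fun k _ => ?_
          rw [Finset.mul_sum]
      _ = 0 := by simp [h3]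
  -- every weight is at least 1/2
  have hhalf : ∀ s ∈ S, (1/2 : ℝ) ≤ p s := by
    intro t0 ht0
    set t : {x // x ∈ S} := ⟨t0, ht0⟩ with htdef
    set Q : ℝ := ∑ i, t.1 i * t.1 i with hQdef
    have hQ0 : 0 ≤ Q := Finset.sum_nonneg fun i _ => mul_self_nonneg _
    have hsum_erase : ∑ s ∈ S.erase t0, p s = 1 - p t0 := by
      have h := Finset.sum_erase_add S p ht0
      rw [h0] at h
      linarith
    have hA : p t0 * Q^3 = 1 - p t0 := by
      have h := hcontr t
      rw [← Finset.sum_erase_add S _ ht0] at h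
      have herase : ∑ s ∈ S.erase t0, p s * (∑ i, s i * t.1 i)^3
          = ∑ s ∈ S.erase t0, -(p s) := by
        refine Finset.sum_congr rfl fun s hs => ?_
        rcases Finset.mem_erase.mp hs with ⟨hne, hmem⟩
        have hst : (⟨s, hmem⟩ : {x // x ∈ S}) ≠ t := by
          simp [htdef, Subtype.ext_iff, hne]
        rw [hoff ⟨s, hmem⟩ t hst]
        ring
      rw [herase, Finset.sum_neg_distrib, hsum_erase] at h
      have : (∑ i, t0 i * t.1 i) = Q := by rw [hQdef]
      rw [this] at h
      linarith
    have hB : p t0 * Q = 1 - p t0 := by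
      have h := hdiag t
      rw [← hQdef] at h
      linarith [h]
    have hQ3 : Q^3 = Q := mul_left_cancel₀ (hpne t) (hA.trans hB.symm)
    have hQ1 : Q ≤ 1 := by
      by_contra hgt
      push_neg at hgt
      have : Q * (Q - 1) * (Q + 1) > 0 :=
        mul_pos (mul_pos (by linarith) (by linarith)) (by linarith)
      nlinarith
    have hp0' : 0 ≤ p t0 := hp0 t0
    nlinarith [hB]
  -- contradiction with total mass 1
  have hScard : S.card = n + 1 := by
    have := hcard2
    rw [Fintype.card_coe, Fintype.card_sum, Fintype.card_fin, Fintype.card_unit] at this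
    exact this
  have hsumge := Finset.card_nsmul_le_sum S p (1/2 : ℝ) hhalf
  rw [h0, hScard, nsmul_eq_mul] at hsumge
  have hn' : (2:ℝ) ≤ n := by exact_mod_cast hn
  push_cast at hsumge
  linarith

lemma integral_of_finsupport {n : ℕ} (μ : Measure (Fin n → ℝ)) [IsProbabilityMeasure μ]
    (S : Finset (Fin n → ℝ)) (hS : μ (↑S : Set (Fin n → ℝ))ᶜ = 0)
    (f : (Fin n → ℝ) → ℝ) :
    ∫ x, f x ∂μ = ∑ s ∈ S, (μ {s}).toReal * f s := by
  classical
  have hres : μ.restrict (↑S : Set (Fin n → ℝ)) = μ :=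
    Measure.restrict_eq_self_of_ae_mem (by rwa [Filter.eventually_iff, mem_ae_iff])
  have hint : IntegrableOn f (↑S : Set (Fin n → ℝ)) μ := by
    have hg : Integrable (fun x => ∑ s ∈ S, Set.indicator {s} (fun _ => f s) x) μ :=
      integrable_finset_sum _ fun s _ =>
        (integrable_indicator_iff (measurableSet_singleton s)).mpr
          (integrableOn_const (measure_ne_top μ _))
    have hfg : f =ᵐ[μ] fun x => ∑ s ∈ S, Set.indicator {s} (fun _ => f s) x := by
      have hmem : ∀ᵐ x ∂μ, x ∈ (↑S : Set (Fin n → ℝ)) := by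
        rwa [Filter.eventually_iff, mem_ae_iff]
      filter_upwards [hmem] with x hx
      simp only [Set.indicator, Set.mem_singleton_iff]
      rw [Finset.sum_ite_eq S x fun s => f s, if_pos (Finset.mem_coe.mp hx)]
    rw [IntegrableOn, hres]
    exact hg.congr hfg.symm
  calc ∫ x, f x ∂μ = ∫ x in (↑S : Set (Fin n → ℝ)), f x ∂μ := by rw [hres]
    _ = ∑ s ∈ S, (μ {s}).toReal • f s := setIntegral_finset S hint
    _ = ∑ s ∈ S, (μ {s}).toReal * f s := by simp [smul_eq_mul]

end Auxiliary

/-- For `n ≥ 2`, no probability measure on `ℝⁿ` supported on at most `n+1` points can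
match the moments of the standard `n`-dimensional Gaussian up to degree three:
`∫ xᵢ dμ = 0`, `∫ xᵢxⱼ dμ = δᵢⱼ`, and `∫ xᵢxⱼx_k dμ = 0`. -/
theorem no_small_support_third_moment_match (n : ℕ) (hn : 2 ≤ n) :
    ¬ ∃ μ : Measure (Fin n → ℝ), IsProbabilityMeasure μ ∧
      (∃ S : Finset (Fin n → ℝ), S.card ≤ n + 1 ∧ μ (↑S : Set (Fin n → ℝ))ᶜ = 0) ∧
      (∀ i, ∫ x, x i ∂μ = 0) ∧
      (∀ i j, ∫ x, x i * x j ∂μ = if i = j then 1 else 0) ∧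
      (∀ i j k, ∫ x, x i * x j * x k ∂μ = 0) := by
  rintro ⟨μ, hprob, ⟨S, hcard, hS⟩, hm1, hm2, hm3⟩
  set p : (Fin n → ℝ) → ℝ := fun x => (μ {x}).toReal with hp
  have hkey : ∀ f : (Fin n → ℝ) → ℝ, ∫ x, f x ∂μ = ∑ s ∈ S, p s * f s :=
    integral_of_finsupport μ S hS
  refine core_alg n hn S hcard p (fun s => ENNReal.toReal_nonneg) ?_ ?_ ?_ ?_
  · have := hkey fun _ => 1
    simp only [integral_const, measure_univ, probReal_univ, ENNReal.toReal_one, smul_eq_mul, one_mul,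
      mul_one] at this
    linarith
  · intro i
    rw [← hkey fun x => x i]
    exact hm1 i
  · intro i j
    rw [← hkey fun x => x i * x j]
    exact hm2 i j
  · intro i j k
    have := hkey fun x => x i * x j * x k
    rw [hm3 i j k] at this
    exact this.symm
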